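/- arXiv:1912.00341 — 2 statements merged into one kernel-verified Lean document; each statement's English description precedes it below -/
import Mathlib

section
/- Let Δ be an irreducible root system, α a simple root, W_α the subgroup of the Weyl group generated by all simple reflections s_β with β ≠ α, and w_{α,0} the longest element of W_α. Then q_α = 1 + ht(w_{α,0}(α^∨)), where ht denotes the height of a coroot in the dual root system and q_α is defined by |R_α| = q_α ϖ_α. -/
open scoped RealInnerProductSpace
open scoped Classical

/-- An (irreducible, reduced, crystallographic) root system in a real inner product
space `V`, together with a choice of base (simple roots), coordinate functions with
respect to the base, and fundamental weights. -/
structure RootSystemData (V : Type*) [NormedAddCommGroup V] [InnerProductSpace ℝ V] where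
  Δ : Finset V
  base : Finset V
  base_sub : base ⊆ Δ
  root_ne_zero : ∀ γ ∈ Δ, γ ≠ 0
  span_eq_top : Submodule.span ℝ (Δ : Set V) = ⊤
  reflect_mem : ∀ γ ∈ Δ, ∀ δ ∈ Δ, δ - (2 * ⟪δ, γ⟫ / ⟪γ, γ⟫) • γ ∈ Δ
  crystallographic : ∀ γ ∈ Δ, ∀ δ ∈ Δ, ∃ k : ℤ, 2 * ⟪δ, γ⟫ / ⟪γ, γ⟫ = (k : ℝ)
  reduced : ∀ γ ∈ Δ, (2 : ℝ) • γ ∉ Δ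
  coord : V → V → ℝ
  coord_add : ∀ α x y, coord (x + y) α = coord x α + coord y α
  coord_smul : ∀ α (c : ℝ) (x : V), coord (c • x) α = c * coord x α
  coord_base : ∀ α ∈ base, ∀ β ∈ base, coord β α = if β = α then 1 else 0
  root_decomp : ∀ γ ∈ Δ, γ = ∑ α ∈ base, coord γ α • α
  pos_or_neg : ∀ γ ∈ Δ, (∀ α ∈ base, 0 ≤ coord γ α) ∨ (∀ α ∈ base, coord γ α ≤ 0)
  coord_int : ∀ γ ∈ Δ, ∀ α ∈ base, ∃ k : ℤ, coord γ α = (k : ℝ)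
  irreducible : ∀ S ⊆ Δ, S.Nonempty →
    (∀ γ ∈ S, ∀ δ ∈ Δ, δ ∉ S → ⟪γ, δ⟫ = 0) → S = Δ
  fw : V → V
  fw_spec : ∀ α ∈ base, ∀ β ∈ base, ⟪fw α, β⟫ = if β = α then ⟪α, α⟫ / 2 else 0

namespace RootSystemData

variable {V : Type*} [NormedAddCommGroup V] [InnerProductSpace ℝ V]

/-- The set of positive roots (nonnegative coordinates w.r.t. the base). -/
noncomputable def posRoots (R : RootSystemData V) : Finset V :=
  R.Δ.filter fun γ => ∀ α ∈ R.base, 0 ≤ R.coord γ α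

/-- The height of a root: the sum of its coordinates in the base. -/
noncomputable def ht (R : RootSystemData V) (γ : V) : ℝ :=
  ∑ α ∈ R.base, R.coord γ α

/-- The height of the coroot `γ^∨` in the dual root system. -/
noncomputable def dualHt (R : RootSystemData V) (γ : V) : ℝ :=
  ∑ α ∈ R.base, R.coord γ α * ⟪α, α⟫ / ⟪γ, γ⟫

/-- `R_α`: the set of roots having positive inner product with the fundamental
weight `ϖ_α`. -/
noncomputable def Rset (R : RootSystemData V) (α : V) : Finset V :=
  R.Δ.filter fun γ => 0 < ⟪γ, R.fw α⟫

/-- `Δ_α(i)`: the set of roots whose coefficient of `α` equals `i`. -/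
noncomputable def level (R : RootSystemData V) (α : V) (i : ℤ) : Finset V :=
  R.Δ.filter fun γ => R.coord γ α = (i : ℝ)

/-- The coordinate function as a linear map. -/
noncomputable def coordL (R : RootSystemData V) (δ : V) : V →ₗ[ℝ] ℝ where
  toFun x := R.coord x δ
  map_add' x y := R.coord_add δ x y
  map_smul' c x := R.coord_smul δ c x

@[simp] lemma coordL_apply (R : RootSystemData V) (δ x : V) :
    R.coordL δ x = R.coord x δ := rfl

lemma inner_self_pos' (R : RootSystemData V) {γ : V} (h : γ ∈ R.Δ) : 0 < ⟪γ, γ⟫ :=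
  lt_of_le_of_ne real_inner_self_nonneg
    (Ne.symm (inner_self_ne_zero.2 (R.root_ne_zero γ h)))

lemma neg_mem' (R : RootSystemData V) {γ : V} (h : γ ∈ R.Δ) : -γ ∈ R.Δ := by
  have h2 := R.reflect_mem γ h γ h
  have hne : ⟪γ, γ⟫ ≠ 0 := (R.inner_self_pos' h).ne'
  have h3 : 2 * ⟪γ, γ⟫ / ⟪γ, γ⟫ = 2 := by field_simp
  rw [h3] at h2
  have h4 : γ - (2 : ℝ) • γ = -γ := by
    rw [two_smul]; abel
  rwa [h4] at h2

lemma inner_fw' (R : RootSystemData V) {γ : V} (hγ : γ ∈ R.Δ) {β : V} (hβ : β ∈ R.base) :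
    ⟪γ, R.fw β⟫ = R.coord γ β * (⟪β, β⟫ / 2) := by
  conv_lhs => rw [R.root_decomp γ hγ]
  rw [sum_inner]
  have hterm : ∀ δ ∈ R.base,
      ⟪R.coord γ δ • δ, R.fw β⟫ = if δ = β then R.coord γ β * (⟪β, β⟫ / 2) else 0 := by
    intro δ hδ
    rw [real_inner_smul_left, real_inner_comm, R.fw_spec β hβ δ hδ]
    by_cases h : δ = β
    · simp [h]
    · simp [h]
  rw [Finset.sum_congr rfl hterm, Finset.sum_ite_eq' R.base β
    (fun _ => R.coord γ β * (⟪β, β⟫ / 2)), if_pos hβ]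

lemma mem_Rset_iff' (R : RootSystemData V) {α : V} (hα : α ∈ R.base) {γ : V} :
    γ ∈ R.Rset α ↔ γ ∈ R.Δ ∧ 0 < R.coord γ α := by
  have hαα : 0 < ⟪α, α⟫ / 2 := by
    have := R.inner_self_pos' (R.base_sub hα); linarith
  unfold Rset
  rw [Finset.mem_filter]
  constructor
  · rintro ⟨h1, h2⟩
    refine ⟨h1, ?_⟩
    rw [R.inner_fw' h1 hα] at h2
    nlinarith [h2, hαα, sq_nonneg (R.coord γ α)]
  · rintro ⟨h1, h2⟩
    refine ⟨h1, ?_⟩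
    rw [R.inner_fw' h1 hα]
    exact mul_pos h2 hαα

lemma Rset_subset_posRoots' (R : RootSystemData V) {α : V} (hα : α ∈ R.base) :
    R.Rset α ⊆ R.posRoots := by
  intro γ hγ
  rw [R.mem_Rset_iff' hα] at hγ
  obtain ⟨h1, h2⟩ := hγ
  rw [posRoots, Finset.mem_filter]
  refine ⟨h1, ?_⟩
  rcases R.pos_or_neg γ h1 with h | h
  · exact h
  · exact absurd (h α hα) (not_le.2 h2)

lemma mem_posRoots_iff' (R : RootSystemData V) {γ : V} :
    γ ∈ R.posRoots ↔ γ ∈ R.Δ ∧ ∀ β ∈ R.base, 0 ≤ R.coord γ β := by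
  rw [posRoots, Finset.mem_filter]

/-- A positive root `γ ≠ β` has a positive coordinate at some simple root `δ ≠ β`. -/
lemma exists_pos_coord' (R : RootSystemData V) {β : V} (hβ : β ∈ R.base)
    {γ : V} (hγ : γ ∈ R.posRoots) (hne : γ ≠ β) :
    ∃ δ ∈ R.base, δ ≠ β ∧ 0 < R.coord γ δ := by
  rw [R.mem_posRoots_iff'] at hγ
  obtain ⟨hγΔ, hpos⟩ := hγ
  by_contra hcon
  push_neg at hcon
  have hzero : ∀ δ ∈ R.base, δ ≠ β → R.coord γ δ = 0 := fun δ hδ hd =>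
    le_antisymm (hcon δ hδ hd) (hpos δ hδ)
  have hβΔ : β ∈ R.Δ := R.base_sub hβ
  have hdec : γ = R.coord γ β • β := by
    conv_lhs => rw [R.root_decomp γ hγΔ]
    rw [Finset.sum_eq_single_of_mem β hβ]
    intro δ hδ hd
    rw [hzero δ hδ hd, zero_smul]
  set c := R.coord γ β with hc
  have hc0 : 0 ≤ c := hpos β hβ
  have hcne : c ≠ 0 := by
    intro h
    rw [h, zero_smul] at hdec
    exact R.root_ne_zero γ hγΔ hdec
  obtain ⟨k, hk⟩ := R.coord_int γ hγΔ β hβ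
  rw [← hc] at hk
  have hk1 : 1 ≤ k := by
    have : (0 : ℝ) < k := hk ▸ lt_of_le_of_ne hc0 (Ne.symm hcne)
    exact_mod_cast this
  have hkne1 : k ≠ 1 := by
    intro h
    apply hne
    rw [hdec, hk, h]; simp
  have hkne2 : k ≠ 2 := by
    intro h
    apply R.reduced β hβΔ
    have : γ = (2 : ℝ) • β := by rw [hdec, hk, h]; norm_num
    rwa [← this]
  have hk3 : 3 ≤ k := by omega
  obtain ⟨m, hm⟩ := R.crystallographic γ hγΔ β hβΔ
  have hββ : ⟪β, β⟫ ≠ 0 := (R.inner_self_pos' hβΔ).ne'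
  have hγβ : ⟪β, γ⟫ = c * ⟪β, β⟫ := by
    conv_lhs => rw [hdec]
    rw [real_inner_smul_right]
  have hγγ : ⟪γ, γ⟫ = c ^ 2 * ⟪β, β⟫ := by
    conv_lhs => rw [hdec]
    rw [real_inner_smul_left, real_inner_smul_right]; ring
  rw [hγβ, hγγ] at hm
  have hcval : 2 / c = (m : ℝ) := by
    rw [← hm]
    field_simp
  have hmk : m * k = 2 := by
    have hcne' : (k : ℝ) ≠ 0 := by exact_mod_cast (by omega : k ≠ 0)
    have : (m : ℝ) * (k : ℝ) = 2 := by
      rw [← hcval, hk]; field_simp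
    exact_mod_cast this
  have : k ≤ 2 := Int.le_of_dvd (by norm_num) ⟨m, by linarith [mul_comm m k]⟩
  omega

/-- The key lemma: the sum of all positive roots pairs with each simple root `β`
to give `⟪β, β⟫` (i.e. `⟨2ρ, β^∨⟩ = 2`). -/
lemma inner_posSum' (R : RootSystemData V) {β : V} (hβ : β ∈ R.base) :
    ⟪∑ γ ∈ R.posRoots, γ, β⟫ = ⟪β, β⟫ := by
  have hβΔ : β ∈ R.Δ := R.base_sub hβ
  have hββ : (0 : ℝ) < ⟪β, β⟫ := R.inner_self_pos' hβΔ
  have hββ' : ⟪β, β⟫ ≠ 0 := hββ.ne'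
  set s : V → V := fun x => x - (2 * ⟪x, β⟫ / ⟪β, β⟫) • β with hs
  -- s is an involution
  have hinv : ∀ x : V, s (s x) = x := by
    intro x
    have h1 : ⟪s x, β⟫ = -⟪x, β⟫ := by
      rw [hs]
      simp only [inner_sub_left, real_inner_smul_left]
      field_simp
      ring
    rw [hs]
    simp only
    rw [h1]
    have : 2 * -⟪x, β⟫ / ⟪β, β⟫ = -(2 * ⟪x, β⟫ / ⟪β, β⟫) := by ring
    rw [this, neg_smul, sub_neg_eq_add]
    abel
  -- β is a positive root
  have hβP : β ∈ R.posRoots := by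
    rw [R.mem_posRoots_iff']
    refine ⟨hβΔ, fun δ hδ => ?_⟩
    rw [R.coord_base δ hδ β hβ]
    split <;> norm_num
  -- s maps posRoots.erase β to itself
  have hsmap : ∀ γ ∈ R.posRoots.erase β, s γ ∈ R.posRoots.erase β := by
    intro γ hγ
    rw [Finset.mem_erase] at hγ
    obtain ⟨hne, hγP⟩ := hγ
    have hγΔ : γ ∈ R.Δ := (R.mem_posRoots_iff'.1 hγP).1
    have hsΔ : s γ ∈ R.Δ := R.reflect_mem β hβΔ γ hγΔ
    obtain ⟨δ, hδ, hδβ, hδpos⟩ := R.exists_pos_coord' hβ hγP hne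
    have hcoord : ∀ ε ∈ R.base, ε ≠ β → R.coord (s γ) ε = R.coord γ ε := by
      intro ε hε hεβ
      rw [hs]
      simp only
      rw [sub_eq_add_neg, ← neg_smul]
      rw [R.coord_add, R.coord_smul, R.coord_base ε hε β hβ, if_neg (Ne.symm hεβ)]
      ring
    have hδpos' : 0 < R.coord (s γ) δ := by rw [hcoord δ hδ hδβ]; exact hδpos
    rw [Finset.mem_erase]
    constructor
    · intro h
      have : R.coord (s γ) δ = 0 := by
        rw [h, R.coord_base δ hδ β hβ, if_neg (Ne.symm hδβ)]
      linarith
    · rw [R.mem_posRoots_iff']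
      refine ⟨hsΔ, ?_⟩
      rcases R.pos_or_neg (s γ) hsΔ with h | h
      · exact h
      · exact absurd (h δ hδ) (not_le.2 hδpos')
  -- sum over posRoots of s two ways
  have hsum1 : ∑ γ ∈ R.posRoots.erase β, s γ = ∑ γ ∈ R.posRoots.erase β, γ :=
    Finset.sum_nbij' s s hsmap hsmap (fun a _ => hinv a) (fun a _ => hinv a)
      (fun a _ => rfl)
  have hsβ : s β = -β := by
    rw [hs]
    simp only
    have : 2 * ⟪β, β⟫ / ⟪β, β⟫ = 2 := by field_simp
    rw [this, two_smul]
    abel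
  have hsplit : ∑ γ ∈ R.posRoots, s γ = s β + ∑ γ ∈ R.posRoots.erase β, s γ :=
    (Finset.add_sum_erase _ s hβP).symm
  have hsplit2 : ∑ γ ∈ R.posRoots, γ = β + ∑ γ ∈ R.posRoots.erase β, γ :=
    (Finset.add_sum_erase _ id hβP).symm
  have hlin : ∑ γ ∈ R.posRoots, s γ
      = (∑ γ ∈ R.posRoots, γ) - (2 * ⟪∑ γ ∈ R.posRoots, γ, β⟫ / ⟪β, β⟫) • β := by
    rw [hs]
    rw [Finset.sum_sub_distrib, ← Finset.sum_smul]
    congr 1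
    congr 1
    rw [sum_inner, Finset.mul_sum, Finset.sum_div]
  have heq : (∑ γ ∈ R.posRoots, γ) - (2 * ⟪∑ γ ∈ R.posRoots, γ, β⟫ / ⟪β, β⟫) • β
      = -β + ((∑ γ ∈ R.posRoots, γ) - β) := by
    rw [← hlin, hsplit, hsβ, hsum1]
    congr 1
    rw [hsplit2]
    abel
  have heq2 : (2 * ⟪∑ γ ∈ R.posRoots, γ, β⟫ / ⟪β, β⟫) • β = (2 : ℝ) • β := by
    have h2 : (2 * ⟪∑ γ ∈ R.posRoots, γ, β⟫ / ⟪β, β⟫) • β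
        = (∑ γ ∈ R.posRoots, γ) - (-β + ((∑ γ ∈ R.posRoots, γ) - β)) := by
      rw [← heq]; abel
    rw [h2, two_smul]; abel
  have hc : 2 * ⟪∑ γ ∈ R.posRoots, γ, β⟫ / ⟪β, β⟫ = 2 :=
    smul_left_injective ℝ (R.root_ne_zero β hβΔ) heq2
  field_simp at hc
  linarith

end RootSystemData

/-- If `w` is the longest element of the parabolic subgroup `W_α`
(characterized here by: it is an involutive isometry preserving the root system,
fixing `ϖ_α`, preserving `R_α` and mapping the positive roots with `α`-coordinate `0`
to negative roots), then `q_α = 1 + ht(w(α)^∨)`. -/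
theorem q_eq_one_add_dualHt_w_alpha
    {V : Type*} [NormedAddCommGroup V] [InnerProductSpace ℝ V]
    (R : RootSystemData V) (α : V) (hα : α ∈ R.base)
    (w : V ≃ₗᵢ[ℝ] V)
    (hwΔ : ∀ γ ∈ R.Δ, w γ ∈ R.Δ)
    (hw2 : ∀ v : V, w (w v) = v)
    (hwfw : w (R.fw α) = R.fw α)
    (hwR : ∀ γ ∈ R.Rset α, w γ ∈ R.Rset α)
    (hwlong : ∀ γ ∈ R.posRoots, R.coord γ α = 0 → ∀ β ∈ R.base, R.coord (w γ) β ≤ 0)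
    (q : ℕ) (hq : (∑ γ ∈ R.Rset α, γ) = (q : ℝ) • R.fw α) :
    (q : ℝ) = 1 + R.dualHt (w α) := by
  classical
  have hαΔ : α ∈ R.Δ := R.base_sub hα
  have hαα : (0:ℝ) < ⟪α, α⟫ := R.inner_self_pos' hαΔ
  have hwα : w α ∈ R.Δ := hwΔ α hαΔ
  -- `w` preserves the `α`-coordinate of roots
  have hcoordw : ∀ γ ∈ R.Δ, R.coord (w γ) α = R.coord γ α := by
    intro γ hγ
    have h1 : ⟪w γ, R.fw α⟫ = ⟪γ, R.fw α⟫ := by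
      conv_lhs => rw [← hwfw]
      exact w.inner_map_map γ (R.fw α)
    rw [R.inner_fw' (hwΔ γ hγ) hα, R.inner_fw' hγ hα] at h1
    have h2 : ⟪α, α⟫ / 2 ≠ 0 := by positivity
    exact mul_right_cancel₀ h2 h1
  set P0 : Finset V := R.posRoots.filter (fun γ => ¬ 0 < R.coord γ α) with hP0
  have hP0mem : ∀ γ ∈ P0, γ ∈ R.posRoots ∧ R.coord γ α = 0 := by
    intro γ hγ
    rw [hP0, Finset.mem_filter] at hγ
    exact ⟨hγ.1, le_antisymm (not_lt.1 hγ.2) ((R.mem_posRoots_iff'.1 hγ.1).2 α hα)⟩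
  -- the sum of positive roots splits as `q • ϖ_α + τ`
  have hfilterR : R.posRoots.filter (fun γ => 0 < R.coord γ α) = R.Rset α := by
    ext γ
    rw [Finset.mem_filter, R.mem_Rset_iff' hα, R.mem_posRoots_iff']
    constructor
    · rintro ⟨⟨h1, _⟩, h2⟩; exact ⟨h1, h2⟩
    · rintro ⟨h1, h2⟩
      refine ⟨⟨h1, ?_⟩, h2⟩
      rcases R.pos_or_neg γ h1 with h | h
      · exact h
      · exact absurd (h α hα) (not_le.2 h2)
  have hsplit : (∑ γ ∈ R.posRoots, γ) = (q:ℝ) • R.fw α + ∑ γ ∈ P0, γ := by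
    rw [← Finset.sum_filter_add_sum_filter_not R.posRoots (fun γ => 0 < R.coord γ α)
      (fun γ => γ), hfilterR, hq]
  -- `w` maps `τ` to `-τ`
  have hφ : ∀ γ ∈ P0, -(w γ) ∈ P0 := by
    intro γ hγ
    obtain ⟨hγP, hγ0⟩ := hP0mem γ hγ
    have hγΔ : γ ∈ R.Δ := (R.mem_posRoots_iff'.1 hγP).1
    have hwγΔ : w γ ∈ R.Δ := hwΔ γ hγΔ
    have hneg : -(w γ) ∈ R.Δ := R.neg_mem' hwγΔ
    have hle := hwlong γ hγP hγ0
    rw [hP0, Finset.mem_filter]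
    constructor
    · rw [R.mem_posRoots_iff']
      refine ⟨hneg, fun β hβ => ?_⟩
      have h1 : R.coord (-(w γ)) β = -R.coord (w γ) β := by
        have := map_neg (R.coordL β) (w γ); simpa using this
      rw [h1]; linarith [hle β hβ]
    · have h1 : R.coord (-(w γ)) α = -R.coord (w γ) α := by
        have := map_neg (R.coordL α) (w γ); simpa using this
      rw [h1, hcoordw γ hγΔ, hγ0]
      norm_num
  have hwτ : w (∑ γ ∈ P0, γ) = -(∑ γ ∈ P0, γ) := by
    have h1 : w (∑ γ ∈ P0, γ) = ∑ γ ∈ P0, w γ := map_sum w (fun γ => γ) P0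
    have h2 : ∑ γ ∈ P0, w γ = ∑ γ ∈ P0, -γ := by
      refine Finset.sum_nbij' (fun γ => -(w γ)) (fun γ => -(w γ)) hφ hφ ?_ ?_ ?_
      · intro a _; simp [hw2]
      · intro a _; simp [hw2]
      · intro a _; simp
    rw [h1, h2]
    rw [Finset.sum_neg_distrib]
  set ρ2 := ∑ γ ∈ R.posRoots, γ with hρ2
  have hwρ2 : w ρ2 = (q:ℝ) • R.fw α + -(∑ γ ∈ P0, γ) := by
    rw [hsplit, map_add, map_smul, hwfw, hwτ]
  have h3 : ⟪ρ2, α⟫ = ⟪α, α⟫ := R.inner_posSum' hα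
  have h4 : ⟪w ρ2, α⟫ = ⟪ρ2, w α⟫ := by
    conv_lhs => rw [← hw2 α]
    exact w.inner_map_map ρ2 (w α)
  have h5 : ⟪ρ2, w α⟫ = ∑ β ∈ R.base, R.coord (w α) β * ⟪β, β⟫ := by
    conv_lhs => rw [R.root_decomp (w α) hwα]
    rw [inner_sum]
    refine Finset.sum_congr rfl fun β hβ => ?_
    rw [real_inner_smul_right, hρ2, R.inner_posSum' hβ]
  have hpair : ⟪ρ2, α⟫ + ⟪w ρ2, α⟫ = (q:ℝ) * ⟪α, α⟫ := by
    have hsum : ρ2 + w ρ2 = ((2 * q : ℝ)) • R.fw α := by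
      rw [hwρ2, hsplit]
      rw [two_mul, add_smul]
      abel
    calc ⟪ρ2, α⟫ + ⟪w ρ2, α⟫ = ⟪ρ2 + w ρ2, α⟫ := (inner_add_left _ _ _).symm
      _ = (2 * q) * ⟪R.fw α, α⟫ := by rw [hsum, real_inner_smul_left]
      _ = (2 * q) * (⟪α, α⟫ / 2) := by rw [R.fw_spec α hα α hα, if_pos rfl]
      _ = (q:ℝ) * ⟪α, α⟫ := by ring
  have h6 : R.dualHt (w α) = (∑ β ∈ R.base, R.coord (w α) β * ⟪β, β⟫) / ⟪α, α⟫ := by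
    rw [RootSystemData.dualHt]
    have hww : ⟪w α, w α⟫ = ⟪α, α⟫ := w.inner_map_map α α
    rw [hww, ← Finset.sum_div]
  have hfinal : (q:ℝ) * ⟪α, α⟫ = ⟪α, α⟫ + ∑ β ∈ R.base, R.coord (w α) β * ⟪β, β⟫ := by
    rw [← hpair, h3, h4, h5]
  rw [h6]
  field_simp
  linarith [hfinal]
end

section
/- Let Δ be an irreducible root system whose highest root θ is a fundamental weight, and let α̂ be the unique simple root with (θ, α̂) ≠ 0. Then α̂ is long, the coefficient of α̂ in θ equals 2, and q_{α̂} = h* − 1, where h* is the dual Coxeter number. -/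
open scoped RealInnerProductSpace
open scoped Classical

section Aux

namespace RootSystemData

variable {V : Type*} [NormedAddCommGroup V] [InnerProductSpace ℝ V] (R : RootSystemData V)

lemma inner_self_pos'' {x : V} (hx : x ≠ 0) : (0:ℝ) < ⟪x, x⟫ := by
  rcases (real_inner_self_nonneg (x := x)).lt_or_eq with h | h
  · exact h
  · exact absurd (real_inner_self_nonpos.1 (le_of_eq h.symm)) hx

lemma coord_zero' (α : V) : R.coord 0 α = 0 := by
  simpa using R.coord_smul α 0 0

lemma coord_sub' (α x y : V) : R.coord (x - y) α = R.coord x α - R.coord y α := by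
  have h : x - y = x + (-1 : ℝ) • y := by simp [sub_eq_add_neg]
  rw [h, R.coord_add, R.coord_smul]; ring

lemma inner_fw_eq (γ : V) (hγ : γ ∈ R.Δ) (α : V) (hα : α ∈ R.base) :
    ⟪γ, R.fw α⟫ = R.coord γ α * (⟪α, α⟫ / 2) := by
  calc ⟪γ, R.fw α⟫ = ⟪R.fw α, γ⟫ := real_inner_comm _ _
    _ = ⟪R.fw α, ∑ β ∈ R.base, R.coord γ β • β⟫ := by rw [← R.root_decomp γ hγ]
    _ = ∑ β ∈ R.base, R.coord γ β * ⟪R.fw α, β⟫ := by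
        rw [inner_sum]; exact Finset.sum_congr rfl fun β _ => real_inner_smul_right _ _ _
    _ = R.coord γ α * (⟪α, α⟫ / 2) := by
        rw [Finset.sum_eq_single α]
        · rw [R.fw_spec α hα α hα]; simp
        · intro β hβ hneq; rw [R.fw_spec α hα β hβ, if_neg hneq, mul_zero]
        · intro h; exact absurd hα h

/-- A positive root whose only possibly-nonzero coordinate is at a simple root `β`
and which differs from `β` cannot exist. -/
lemma not_multiple (β : V) (hβ : β ∈ R.base) (γ : V) (hγ : γ ∈ R.Δ) (hneq : γ ≠ β)
    (h0 : ∀ α ∈ R.base, α ≠ β → R.coord γ α = 0) (hpos : 0 ≤ R.coord γ β) : False := by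
  have hβΔ := R.base_sub hβ
  have hβ0 : β ≠ 0 := R.root_ne_zero β hβΔ
  have hββ : (0:ℝ) < ⟪β, β⟫ := inner_self_pos'' hβ0
  have hdec : γ = R.coord γ β • β := by
    conv_lhs => rw [R.root_decomp γ hγ]
    apply Finset.sum_eq_single
    · intro α hα hαβ; rw [h0 α hα hαβ, zero_smul]
    · intro h; exact absurd hβ h
  obtain ⟨c, hc⟩ := R.coord_int γ hγ β hβ
  have hc0 : (0:ℤ) ≤ c := by exact_mod_cast hc ▸ hpos
  have hcne0 : c ≠ 0 := by
    rintro rfl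
    exact R.root_ne_zero γ hγ (by rw [hdec, hc]; simp)
  have hcne1 : c ≠ 1 := by
    rintro rfl
    exact hneq (by rw [hdec, hc]; simp)
  have hc2 : 2 ≤ c := by omega
  obtain ⟨m, hm⟩ := R.crystallographic γ hγ β hβΔ
  rw [hdec, hc] at hm
  have hcR : ((c:ℝ)) ≠ 0 := Int.cast_ne_zero.2 hcne0
  rw [real_inner_smul_right, real_inner_smul_left, real_inner_smul_right] at hm
  -- hm : 2 * ((c:ℝ) * ⟪β,β⟫) / ((c:ℝ) * ((c:ℝ) * ⟪β,β⟫)) = m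
  have hcpos : (0:ℝ) < (c:ℝ) := by exact_mod_cast (by omega : (0:ℤ) < c)
  have hmc : (m : ℝ) * (c : ℝ) = 2 := by
    field_simp at hm
    have hx : (0:ℝ) < (c:ℝ) * ⟪β, β⟫ := mul_pos hcpos hββ
    have hz : ((m:ℝ) * (c:ℝ) - 2) * ((c:ℝ) * ⟪β, β⟫) = 0 := by linear_combination (-((c:ℝ) * ⟪β, β⟫)) * hm
    rcases mul_eq_zero.1 hz with h | h
    · linarith
    · exact absurd h (ne_of_gt hx)
  have hmcZ : m * c = 2 := by exact_mod_cast hmc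
  have hm1 : 1 ≤ m := by nlinarith
  have : c = 2 := by nlinarith
  subst this
  exact R.reduced β hβΔ (by rw [hdec, hc] at hγ; push_cast at hγ; exact_mod_cast hγ)

lemma refl_pos (β : V) (hβ : β ∈ R.base) (γ : V) (hγ : γ ∈ R.posRoots) (hneq : γ ≠ β) :
    (γ - (2 * ⟪γ, β⟫ / ⟪β, β⟫) • β) ∈ R.posRoots ∧ (γ - (2 * ⟪γ, β⟫ / ⟪β, β⟫) • β) ≠ β := by
  obtain ⟨hγΔ, hγpos⟩ := Finset.mem_filter.1 hγ
  have hδΔ : γ - (2 * ⟪γ, β⟫ / ⟪β, β⟫) • β ∈ R.Δ := R.reflect_mem β (R.base_sub hβ) γ hγΔ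
  have hcoord : ∀ α ∈ R.base, α ≠ β →
      R.coord (γ - (2 * ⟪γ, β⟫ / ⟪β, β⟫) • β) α = R.coord γ α := by
    intro α hα hαβ
    rw [R.coord_sub', R.coord_smul, R.coord_base α hα β hβ, if_neg (Ne.symm hαβ)]
    ring
  constructor
  · rw [RootSystemData.posRoots, Finset.mem_filter]
    refine ⟨hδΔ, ?_⟩
    rcases R.pos_or_neg _ hδΔ with hp | hn
    · exact hp
    · exfalso
      refine R.not_multiple β hβ γ hγΔ hneq ?_ (hγpos β hβ)
      intro α hα hαβ
      have h1 := hn α hα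
      rw [hcoord α hα hαβ] at h1
      exact le_antisymm h1 (hγpos α hα)
  · intro hEq
    refine R.not_multiple β hβ γ hγΔ hneq ?_ (hγpos β hβ)
    intro α hα hαβ
    have h1 := hcoord α hα hαβ
    rw [hEq, R.coord_base α hα β hβ, if_neg (Ne.symm hαβ)] at h1
    exact h1.symm

lemma sum_pos_inner (β : V) (hβ : β ∈ R.base) :
    ⟪∑ γ ∈ R.posRoots, γ, β⟫ = ⟪β, β⟫ := by
  have hβΔ := R.base_sub hβ
  have hββ : (0:ℝ) < ⟪β, β⟫ := inner_self_pos'' (R.root_ne_zero β hβΔ)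
  have hβpos : β ∈ R.posRoots := by
    rw [RootSystemData.posRoots, Finset.mem_filter]
    refine ⟨hβΔ, fun α hα => ?_⟩
    rw [R.coord_base α hα β hβ]
    split <;> norm_num
  have hzero : ∑ γ ∈ R.posRoots.erase β, ⟪γ, β⟫ = 0 := by
    apply Finset.sum_involution (fun γ _ => γ - (2 * ⟪γ, β⟫ / ⟪β, β⟫) • β)
    · intro γ _
      rw [inner_sub_left, real_inner_smul_left, div_mul_cancel₀ _ (ne_of_gt hββ)]
      ring
    · intro γ _ hf hEq
      apply hf
      have h1 : (2 * ⟪γ, β⟫ / ⟪β, β⟫) • β = 0 := by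
        have := sub_eq_self.1 hEq
        exact this
      rcases smul_eq_zero.1 h1 with h | h
      · rcases div_eq_zero_iff.1 h with h' | h'
        · linarith
        · exact absurd h' (ne_of_gt hββ)
      · exact absurd h (R.root_ne_zero β hβΔ)
    · intro γ hγ
      obtain ⟨hγneq, hγpos⟩ := Finset.mem_erase.1 hγ
      obtain ⟨h1, h2⟩ := R.refl_pos β hβ γ hγpos hγneq
      exact Finset.mem_erase.2 ⟨h2, h1⟩
    · intro γ hγ
      have h1 : ⟪γ - (2 * ⟪γ, β⟫ / ⟪β, β⟫) • β, β⟫ = -⟪γ, β⟫ := by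
        rw [inner_sub_left, real_inner_smul_left, div_mul_cancel₀ _ (ne_of_gt hββ)]
        ring
      rw [h1]
      have h2 : 2 * -⟪γ, β⟫ / ⟪β, β⟫ = -(2 * ⟪γ, β⟫ / ⟪β, β⟫) := by ring
      rw [h2, neg_smul, sub_neg_eq_add, sub_add_cancel]
  rw [sum_inner, ← Finset.add_sum_erase _ _ hβpos, hzero, add_zero]

end RootSystemData

end Aux

/-- If the highest root `θ` is a fundamental weight, `θ = ϖ_α̂` with
`(θ, α̂) ≠ 0`, then `α̂` is long, the coefficient of `α̂` in `θ` is `2`, and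
`q_α̂ = h* − 1`. -/
theorem q_of_fundamental_highest_root
    {V : Type*} [NormedAddCommGroup V] [InnerProductSpace ℝ V]
    (R : RootSystemData V) (αh : V) (hαh : αh ∈ R.base)
    (θ : V) (hθ : θ ∈ R.Δ)
    (hθmax : ∀ γ ∈ R.Δ, ∀ β ∈ R.base, R.coord γ β ≤ R.coord θ β)
    (hfund : θ = R.fw αh) (hne : ⟪θ, αh⟫ ≠ 0)
    (q : ℕ) (hq : (∑ γ ∈ R.Rset αh, γ) = (q : ℝ) • R.fw αh) :
    ⟪αh, αh⟫ = ⟪θ, θ⟫ ∧ R.coord θ αh = 2 ∧ (q : ℝ) = (R.dualHt θ + 1) - 1 := by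

  classical
  -- Basic positivity facts
  have hαΔ : αh ∈ R.Δ := R.base_sub hαh
  have hα0 : αh ≠ 0 := R.root_ne_zero αh hαΔ
  have hαα : (0:ℝ) < ⟪αh, αh⟫ := RootSystemData.inner_self_pos'' hα0
  have hθ0 : θ ≠ 0 := R.root_ne_zero θ hθ
  have hθθpos : (0:ℝ) < ⟪θ, θ⟫ := RootSystemData.inner_self_pos'' hθ0
  -- inner product of any root with θ = fw αh
  have key : ∀ γ ∈ R.Δ, ⟪γ, θ⟫ = R.coord γ αh * (⟪αh, αh⟫ / 2) := by
    intro γ hγ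
    rw [hfund]
    exact R.inner_fw_eq γ hγ αh hαh
  -- the coefficient c of αh in θ
  have hθθ : ⟪θ, θ⟫ = R.coord θ αh * (⟪αh, αh⟫ / 2) := key θ hθ
  obtain ⟨c, hc⟩ := R.coord_int θ hθ αh hαh
  have hc1 : (1:ℤ) ≤ c := by
    have h1 := hθmax αh hαΔ αh hαh
    rw [R.coord_base αh hαh αh hαh, if_pos rfl, hc] at h1
    exact_mod_cast h1
  -- crystallographic condition: 2(αh,θ)/(θ,θ) is an integer m with m*c = 2
  obtain ⟨m, hm⟩ := R.crystallographic θ hθ αh hαΔ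
  have hαθ : ⟪αh, θ⟫ = ⟪αh, αh⟫ / 2 := by
    have := key αh hαΔ
    rw [R.coord_base αh hαh αh hαh, if_pos rfl] at this
    rw [this]; ring
  have hmc : (m:ℝ) * (c:ℝ) = 2 := by
    rw [hαθ] at hm
    rw [hθθ, hc] at hm
    have h2 : (2:ℝ) * (⟪αh, αh⟫ / 2) = (m:ℝ) * ((c:ℝ) * (⟪αh, αh⟫ / 2)) := by
      field_simp at hm ⊢
      nlinarith [hm]
    nlinarith [h2, hαα]
  have hmcZ : m * c = 2 := by exact_mod_cast hmc
  have hm1 : (1:ℤ) ≤ m := by nlinarith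
  have hcle : c ≤ 2 := by nlinarith
  -- rule out c = 1
  have hc2 : c = 2 := by
    by_contra hcne
    have hc1' : c = 1 := by omega
    subst hc1'
    -- then (θ,θ) = (αh,αh)/2 and 2(αh,θ)/(θ,θ) = 2
    have hm2 : m = 2 := by omega
    have hratio : 2 * ⟪αh, θ⟫ / ⟪θ, θ⟫ = (2:ℝ) := by rw [hm]; exact_mod_cast hm2
    -- reflection of αh through θ and its negative
    have hδ : αh - (2 * ⟪αh, θ⟫ / ⟪θ, θ⟫) • θ ∈ R.Δ := R.reflect_mem θ hθ αh hαΔ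
    rw [hratio] at hδ
    set δ := αh - (2:ℝ) • θ with hδdef
    have hδ0 : δ ≠ 0 := R.root_ne_zero δ hδ
    have hδδ : (0:ℝ) < ⟪δ, δ⟫ := RootSystemData.inner_self_pos'' hδ0
    have hnegδ : (2:ℝ) • θ - αh ∈ R.Δ := by
      have h1 : δ - (2 * ⟪δ, δ⟫ / ⟪δ, δ⟫) • δ ∈ R.Δ := R.reflect_mem δ hδ δ hδ
      have h2 : 2 * ⟪δ, δ⟫ / ⟪δ, δ⟫ = (2:ℝ) := by field_simp
      rw [h2] at h1
      have h3 : δ - (2:ℝ) • δ = (2:ℝ) • θ - αh := by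
        rw [hδdef]; module
      rwa [h3] at h1
    -- maximality forces all other coordinates of θ to vanish
    have hθpos : ∀ β ∈ R.base, 0 ≤ R.coord θ β := by
      rcases R.pos_or_neg θ hθ with hp | hn
      · exact hp
      · exfalso
        have := hn αh hαh
        rw [hc] at this
        norm_num at this
    have hcoord0 : ∀ β ∈ R.base, β ≠ αh → R.coord θ β = 0 := by
      intro β hβ hβα
      have h1 := hθmax _ hnegδ β hβ
      rw [R.coord_sub', R.coord_smul, R.coord_base β hβ αh hαh, if_neg (Ne.symm hβα)] at h1
      have h2 := hθpos β hβ
      linarith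
    -- hence θ = αh
    have hθα : θ = αh := by
      conv_lhs => rw [R.root_decomp θ hθ]
      rw [Finset.sum_eq_single αh]
      · rw [hc]; norm_num
      · intro β hβ hβα; rw [hcoord0 β hβ hβα, zero_smul]
      · intro h; exact absurd hαh h
    rw [hc, hθα] at hθθ
    norm_num at hθθ
    nlinarith [real_inner_self_eq_norm_sq αh]
  -- Parts 1 and 2
  have part2 : R.coord θ αh = 2 := by rw [hc, hc2]; norm_num
  have part1 : ⟪αh, αh⟫ = ⟪θ, θ⟫ := by
    rw [hθθ, part2]; ring
  refine ⟨part1, part2, ?_⟩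
  -- Part 3: q = dualHt θ
  have hsub : R.Rset αh ⊆ R.posRoots := by
    intro γ hγ
    obtain ⟨hγΔ, hγlt⟩ := Finset.mem_filter.1 hγ
    rw [R.inner_fw_eq γ hγΔ αh hαh] at hγlt
    have hcγ : 0 < R.coord γ αh := by
      by_contra h
      push_neg at h
      nlinarith
    rw [RootSystemData.posRoots, Finset.mem_filter]
    refine ⟨hγΔ, ?_⟩
    rcases R.pos_or_neg γ hγΔ with hp | hn
    · exact hp
    · exact absurd (hn αh hαh) (by linarith)
  have hvanish : ∀ γ ∈ R.posRoots, γ ∉ R.Rset αh → ⟪γ, θ⟫ = 0 := by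
    intro γ hγ hγn
    obtain ⟨hγΔ, hγpos⟩ := Finset.mem_filter.1 hγ
    have hle : ⟪γ, R.fw αh⟫ ≤ 0 := by
      by_contra h
      push_neg at h
      exact hγn (Finset.mem_filter.2 ⟨hγΔ, h⟩)
    have hge : 0 ≤ ⟪γ, R.fw αh⟫ := by
      rw [R.inner_fw_eq γ hγΔ αh hαh]
      have := hγpos αh hαh
      positivity
    rw [hfund]
    linarith
  -- pairing the hypothesis with θ
  have hpair : (∑ γ ∈ R.posRoots, ⟪γ, θ⟫) = (q:ℝ) * ⟪θ, θ⟫ := by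
    rw [← Finset.sum_subset hsub hvanish, ← sum_inner, hq, real_inner_smul_left, ← hfund]
  -- the sum over positive roots equals dualHt θ * (θ,θ)
  have h2ρ : (∑ γ ∈ R.posRoots, ⟪γ, θ⟫) = ∑ β ∈ R.base, R.coord θ β * ⟪β, β⟫ := by
    rw [← sum_inner]
    conv_lhs => rw [R.root_decomp θ hθ]
    rw [inner_sum]
    refine Finset.sum_congr rfl fun β hβ => ?_
    rw [real_inner_smul_right, R.sum_pos_inner β hβ]
  have hdual : R.dualHt θ * ⟪θ, θ⟫ = ∑ β ∈ R.base, R.coord θ β * ⟪β, β⟫ := by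
    rw [RootSystemData.dualHt, ← Finset.sum_div, div_mul_cancel₀]
    exact ne_of_gt hθθpos
  have hqval : (q:ℝ) = R.dualHt θ := by
    have h1 : (q:ℝ) * ⟪θ, θ⟫ = R.dualHt θ * ⟪θ, θ⟫ := by
      rw [hdual, ← h2ρ, hpair]
    exact mul_right_cancel₀ (ne_of_gt hθθpos) h1
  rw [hqval]; ring
end
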